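/- (Generalized chi-squared representation of a Gaussian quadratic form.) Let x be a random vector in ℝⁿ distributed according to the multivariate Gaussian measure N(μ, Σ), where μ ∈ ℝⁿ and Σ ∈ ℝ^{n×n} is symmetric positive definite with symmetric positive-definite square root Σ^{1/2}, and let N ∈ ℝ^{n×n} be symmetric. Let Σ^{1/2} N Σ^{1/2} = U Λ Uᵀ be a spectral decomposition with U ∈ ℝ^{n×n} orthogonal and Λ = diag(λ₁, …, λ_n), and set b = Uᵀ Σ^{-1/2} μ. Then the law of the quadratic form Q(x) = xᵀNx equals the pushforward of the standard Gaussian measure N(0, I_n) on ℝⁿ under the map w ↦ Σ_{i=1}^{n} λ_i (w_i + b_i)². -/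

import Mathlib

open MeasureTheory ProbabilityTheory Matrix
open ENNReal

/-- The standard Gaussian measure on `ℝⁿ` (iid standard normal coordinates). -/
noncomputable def stdGaussian (n : ℕ) : Measure (Fin n → ℝ) :=
  Measure.pi fun _ => gaussianReal 0 1

/-- The multivariate Gaussian measure `N(m, Σ)` on `ℝⁿ` with mean `m` and symmetric
positive-definite covariance `Σ`, realized as the pushforward of the standard Gaussian
under `w ↦ m + Σ^{1/2} w`, where `Σ^{1/2}` is the unique positive-semidefinite square
root of `Σ`. -/
noncomputable def multivariateGaussian {n : ℕ} (m : Fin n → ℝ)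
    {S : Matrix (Fin n) (Fin n) ℝ} (hS : S.PosDef) : Measure (Fin n → ℝ) :=
  (stdGaussian n).map (fun w => m + ((hS.posSemidef.1.eigenvectorUnitary : Matrix (Fin n) (Fin n) ℝ) *
    diagonal (RCLike.ofReal ∘ Real.sqrt ∘ hS.posSemidef.1.eigenvalues) *
    (star (hS.posSemidef.1.eigenvectorUnitary : Matrix (Fin n) (Fin n) ℝ))).mulVec w)

theorem my_lintegral_pi_prod : ∀ {n : ℕ} (μ : Fin n → Measure ℝ) [∀ i, SigmaFinite (μ i)]
    (f : Fin n → ℝ → ℝ≥0∞), (∀ i, Measurable (f i)) →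
    ∫⁻ x : Fin n → ℝ, ∏ i, f i (x i) ∂(Measure.pi μ) = ∏ i, ∫⁻ y, f i y ∂(μ i) := by
  intro n
  induction n with
  | zero =>
      intro μ _ f hf
      simp [lintegral_one, Measure.pi_univ]
  | succ n ih =>
      intro μ _ f hf
      have hmeas : Measurable fun x : Fin (n+1) → ℝ => ∏ i, f i (x i) :=
        Finset.measurable_prod _ fun i _ => (hf i).comp (measurable_pi_apply i)
      calc
        ∫⁻ x : Fin (n+1) → ℝ, ∏ i, f i (x i) ∂(Measure.pi μ)
            = ∫⁻ p : ℝ × (Fin n → ℝ), f 0 p.1 * ∏ i : Fin n, f i.succ (p.2 i)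
              ∂((μ 0).prod (Measure.pi fun i => μ ((0 : Fin (n+1)).succAbove i))) := by
          rw [← ((measurePreserving_piFinSuccAbove μ 0).symm).lintegral_comp hmeas]
          simp_rw [MeasurableEquiv.piFinSuccAbove_symm_apply, Fin.insertNthEquiv,
            Fin.prod_univ_succ, Fin.insertNth_zero, Equiv.coe_fn_mk, Fin.cons_succ,
            Fin.zero_succAbove, cast_eq, Fin.cons_zero]
        _ = (∫⁻ y, f 0 y ∂(μ 0)) * ∏ i : Fin n, ∫⁻ y, f i.succ y ∂(μ i.succ) := by
          rw [lintegral_prod_mul (f := f 0) (g := fun y : Fin n → ℝ => ∏ i, f i.succ (y i))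
            (hf 0).aemeasurable
            (Finset.measurable_prod _ fun i _ =>
              ((hf i.succ).comp (measurable_pi_apply i))).aemeasurable]
          rw [ih (fun i => μ ((0 : Fin (n+1)).succAbove i)) (fun i => f i.succ)
            (fun i => hf i.succ)]
          simp [Fin.zero_succAbove]
        _ = ∏ i, ∫⁻ y, f i y ∂(μ i) := by rw [Fin.prod_univ_succ]

theorem stdGaussian_eq_withDensity (n : ℕ) :
    stdGaussian n = (volume : Measure (Fin n → ℝ)).withDensity
      (fun x => ∏ i, gaussianPDF 0 1 (x i)) := by
  rw [_root_.stdGaussian]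
  apply Measure.pi_eq
  intro s hs
  rw [withDensity_apply _ (MeasurableSet.univ_pi hs),
    ← lintegral_indicator (MeasurableSet.univ_pi hs)]
  have key : ∀ x : Fin n → ℝ, (Set.pi Set.univ s).indicator
      (fun x => ∏ i, gaussianPDF 0 1 (x i)) x
      = ∏ i, (s i).indicator (gaussianPDF 0 1) (x i) := by
    intro x
    by_cases hx : x ∈ Set.pi Set.univ s
    · rw [Set.indicator_of_mem hx]
      exact Finset.prod_congr rfl fun i _ =>
        (Set.indicator_of_mem (hx i (Set.mem_univ i)) _).symm
    · rw [Set.indicator_of_notMem hx]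
      simp only [Set.mem_pi, Set.mem_univ, forall_true_left] at hx
      push_neg at hx
      obtain ⟨i, hi⟩ := hx
      exact (Finset.prod_eq_zero (Finset.mem_univ i)
        (Set.indicator_of_notMem hi _)).symm
  simp_rw [key]
  rw [show (volume : Measure (Fin n → ℝ)) = Measure.pi fun _ => (volume : Measure ℝ) from
    volume_pi]
  rw [my_lintegral_pi_prod _ _ (fun i => (measurable_gaussianPDF 0 1).indicator (hs i))]
  refine Finset.prod_congr rfl fun i _ => ?_
  rw [lintegral_indicator (hs i), gaussianReal_of_var_ne_zero _ one_ne_zero,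
    withDensity_apply _ (hs i)]

theorem my_map_withDensity {α β : Type*} [MeasurableSpace α] [MeasurableSpace β]
    (e : α ≃ᵐ β) (μ : Measure α) (g : β → ℝ≥0∞) (hg : Measurable g) :
    (μ.withDensity (fun a => g (e a))).map e = (μ.map e).withDensity g := by
  ext s hs
  rw [MeasurableEquiv.map_apply, withDensity_apply _ hs,
    setLIntegral_map hs hg e.measurable, withDensity_apply _ (e.measurable hs)]

section orth
variable {n : ℕ} {V : Matrix (Fin n) (Fin n) ℝ}

theorem mulVec_measurable (M : Matrix (Fin n) (Fin n) ℝ) :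
    Measurable fun w : Fin n → ℝ => M.mulVec w := by
  have : (fun w : Fin n → ℝ => M.mulVec w) = Matrix.toLin' M := by
    funext w; simp [Matrix.toLin'_apply]
  rw [this]
  exact (LinearMap.continuous_of_finiteDimensional (Matrix.toLin' M)).measurable

theorem dot_orth (hV : Vᵀ * V = 1) (x : Fin n → ℝ) :
    V.mulVec x ⬝ᵥ V.mulVec x = x ⬝ᵥ x := by
  rw [dotProduct_mulVec, ← Matrix.mulVec_transpose, Matrix.mulVec_mulVec, hV, Matrix.one_mulVec]

theorem volume_preserving_mulVec (hdet : |V.det| = 1) :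
    MeasurePreserving (fun w : Fin n → ℝ => V.mulVec w) volume volume := by
  refine ⟨mulVec_measurable V, ?_⟩
  have h0 : V.det ≠ 0 := fun h => by simp [h] at hdet
  have : (fun w : Fin n → ℝ => V.mulVec w) = Matrix.toLin' V := by
    funext w; simp [Matrix.toLin'_apply]
  rw [this, Real.map_matrix_volume_pi_eq_smul_volume_pi h0, abs_inv, hdet]
  simp

/-- orthogonal invariance of the standard Gaussian -/
theorem stdGaussian_map_mulVec (hV : Vᵀ * V = 1) (hV' : V * Vᵀ = 1) :
    (stdGaussian n).map (fun w => V.mulVec w) = stdGaussian n := by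
  have hdet : |V.det| = 1 := by
    have h2 : V.det * V.det = 1 := by
      have := congrArg Matrix.det hV
      rwa [Matrix.det_mul, Matrix.det_transpose, Matrix.det_one] at this
    nlinarith [abs_nonneg V.det, abs_mul_abs_self V.det]
  -- the measurable equiv given by V
  let e : (Fin n → ℝ) ≃ᵐ (Fin n → ℝ) :=
    { toFun := fun w => V.mulVec w
      invFun := fun w => Vᵀ.mulVec w
      left_inv := fun w => by
        show Vᵀ.mulVec (V.mulVec w) = w
        rw [Matrix.mulVec_mulVec, hV, Matrix.one_mulVec]
      right_inv := fun w => by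
        show V.mulVec (Vᵀ.mulVec w) = w
        rw [Matrix.mulVec_mulVec, hV', Matrix.one_mulVec]
      measurable_toFun := mulVec_measurable V
      measurable_invFun := mulVec_measurable Vᵀ }
  have hGmeas : Measurable fun x : Fin n → ℝ => ∏ i, gaussianPDF 0 1 (x i) :=
    Finset.measurable_prod _ fun i _ =>
      (measurable_gaussianPDF 0 1).comp (measurable_pi_apply i)
  have hGinv : ∀ x : Fin n → ℝ,
      (∏ i, gaussianPDF 0 1 (V.mulVec x i)) = ∏ i, gaussianPDF 0 1 (x i) := by
    intro x
    have hsum : ∑ i, V.mulVec x i ^ 2 = ∑ i, x i ^ 2 := by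
      have := dot_orth hV x
      simpa [dotProduct, pow_two] using this
    have h2 : ∀ a : Fin n → ℝ, ∑ i, -(a i) ^ 2 / (2:ℝ) = -(∑ i, (a i) ^ 2) / 2 := by
      intro a
      rw [← Finset.sum_div, ← Finset.sum_neg_distrib]
    simp only [gaussianPDF, gaussianPDFReal, sub_zero, NNReal.coe_one, mul_one]
    rw [← ENNReal.ofReal_prod_of_nonneg, ← ENNReal.ofReal_prod_of_nonneg]
    · congr 1
      rw [Finset.prod_mul_distrib, Finset.prod_mul_distrib, ← Real.exp_sum, ← Real.exp_sum,
        h2, h2, hsum]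
    · intro i _
      positivity
    · intro i _
      positivity
  show (stdGaussian n).map e = stdGaussian n
  rw [stdGaussian_eq_withDensity]
  have : (volume : Measure (Fin n → ℝ)).withDensity (fun x => ∏ i, gaussianPDF 0 1 (x i))
      = (volume : Measure (Fin n → ℝ)).withDensity
        (fun x => (fun y : Fin n → ℝ => ∏ i, gaussianPDF 0 1 (y i)) (e x)) := by
    congr 1
    funext x
    exact (hGinv x).symm
  rw [this, my_map_withDensity e volume _ hGmeas,
    show Measure.map (⇑e) (volume : Measure (Fin n → ℝ)) = volume from
      (volume_preserving_mulVec hdet).map_eq]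
  exact this

theorem main_pointwise {μ b lam : Fin n → ℝ} {R N U : Matrix (Fin n) (Fin n) ℝ}
    (hR : R.PosDef) (hRSymm : R.IsSymm) (hNSymm : N.IsSymm)
    (hSpec : R * N * R = U * diagonal lam * Uᵀ)
    (hb : b = Uᵀ.mulVec (R⁻¹.mulVec μ)) (w : Fin n → ℝ) :
    (μ + R.mulVec w) ⬝ᵥ N.mulVec (μ + R.mulVec w)
      = ∑ i, lam i * ((Uᵀ.mulVec w) i + b i) ^ 2 := by
  have hRdet : IsUnit R.det := isUnit_iff_ne_zero.mpr (ne_of_gt hR.det_pos)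
  have hRinv : R * R⁻¹ = 1 := Matrix.mul_nonsing_inv R hRdet
  set v := w + R⁻¹.mulVec μ with hv
  have hx : μ + R.mulVec w = R.mulVec v := by
    rw [hv, Matrix.mulVec_add, Matrix.mulVec_mulVec, hRinv, Matrix.one_mulVec]
    abel
  have hz : Uᵀ.mulVec v = Uᵀ.mulVec w + b := by
    rw [hv, Matrix.mulVec_add, hb]
  rw [hx]
  have h1 : R.mulVec v ⬝ᵥ N.mulVec (R.mulVec v) = v ⬝ᵥ (R * N * R).mulVec v := by
    rw [Matrix.mulVec_mulVec, Matrix.dotProduct_mulVec, ← Matrix.mulVec_transpose,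
      Matrix.transpose_mul, hNSymm.eq, hRSymm.eq, Matrix.mulVec_mulVec,
      dotProduct_comm]
  rw [h1, hSpec]
  have h2 : (U * diagonal lam * Uᵀ).mulVec v
      = U.mulVec ((diagonal lam).mulVec (Uᵀ.mulVec v)) := by
    rw [Matrix.mulVec_mulVec, Matrix.mulVec_mulVec]
  rw [h2, Matrix.dotProduct_mulVec (v := v), ← Matrix.mulVec_transpose, hz]
  simp only [dotProduct, Matrix.mulVec_diagonal, Pi.add_apply]
  exact Finset.sum_congr rfl fun i _ => by ring

end orth

section sqrtport
open scoped MatrixOrder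

theorem my_sqrt_eq {n : ℕ} {Cov R : Matrix (Fin n) (Fin n) ℝ} (hCov : Cov.PosDef)
    (hR : R.PosDef) (hRsq : R * R = Cov) :
    R = (hCov.posSemidef.1.eigenvectorUnitary : Matrix (Fin n) (Fin n) ℝ) *
      diagonal (RCLike.ofReal ∘ Real.sqrt ∘ hCov.posSemidef.1.eigenvalues) *
      (star (hCov.posSemidef.1.eigenvectorUnitary : Matrix (Fin n) (Fin n) ℝ)) := by
  have h1 : CFC.sqrt Cov = R := CFC.sqrt_unique hRsq hR.posSemidef.nonneg
  rw [← h1, CFC.sqrt_eq_real_sqrt Cov hCov.posSemidef.nonneg,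
    cfcₙ_eq_cfc (hf := Real.continuous_sqrt.continuousOn) (hf0 := Real.sqrt_zero),
    hCov.posSemidef.1.cfc_eq]
  rfl

end sqrtport


/-- Generalized chi-squared representation of a Gaussian quadratic form: if
`x ~ N(μ, Σ)` with `Σ` symmetric positive definite with symmetric positive-definite
square root `R`, `N` is symmetric, `R N R = U Λ Uᵀ` is a spectral decomposition with
`U` orthogonal and `Λ = diag(λ)`, and `b = Uᵀ R⁻¹ μ`, then the law of `Q(x) = xᵀNx`
is the pushforward of the standard Gaussian `N(0, I)` under
`w ↦ ∑ i, λᵢ (wᵢ + bᵢ)²`. -/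
theorem gaussian_quadratic_form_generalized_chi_squared {n : ℕ} (μ : Fin n → ℝ)
    {Cov R N U : Matrix (Fin n) (Fin n) ℝ}
    (hCov : Cov.PosDef) (hCovSymm : Cov.IsSymm)
    (hR : R.PosDef) (hRSymm : R.IsSymm) (hRsq : R * R = Cov)
    (hNSymm : N.IsSymm)
    (hU : Uᵀ * U = 1) (hU' : U * Uᵀ = 1)
    (lam : Fin n → ℝ)
    (hSpec : R * N * R = U * diagonal lam * Uᵀ)
    (b : Fin n → ℝ) (hb : b = Uᵀ.mulVec (R⁻¹.mulVec μ)) :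
    (multivariateGaussian μ hCov).map (fun x => x ⬝ᵥ N.mulVec x) =
      (stdGaussian n).map (fun w => ∑ i, lam i * (w i + b i) ^ 2) := by
  have hRsqrt := my_sqrt_eq hCov hR hRsq
  have hQmeas : Measurable fun x : Fin n → ℝ => x ⬝ᵥ N.mulVec x := by
    simp only [dotProduct, Matrix.mulVec]
    exact Finset.measurable_sum _ fun i _ =>
      (measurable_pi_apply i).mul (Finset.measurable_sum _ fun j _ =>
        (measurable_const.mul (measurable_pi_apply j)))
  have hfmeas : Measurable fun w : Fin n → ℝ => μ + R.mulVec w :=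
    (mulVec_measurable R).const_add μ
  have hgmeas : Measurable fun y : Fin n → ℝ => ∑ i, lam i * (y i + b i) ^ 2 :=
    Finset.measurable_sum _ fun i _ =>
      measurable_const.mul (by fun_prop)
  rw [_root_.multivariateGaussian, ← hRsqrt,
    Measure.map_map hQmeas hfmeas]
  have hcomp : ((fun x => x ⬝ᵥ N.mulVec x) ∘ fun w => μ + R.mulVec w)
      = (fun y => ∑ i, lam i * (y i + b i) ^ 2) ∘ (fun w => Uᵀ.mulVec w) :=
    funext fun w => main_pointwise hR hRSymm hNSymm hSpec hb w
  rw [hcomp, ← Measure.map_map hgmeas (mulVec_measurable Uᵀ),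
    stdGaussian_map_mulVec (by rwa [transpose_transpose]) (by rwa [transpose_transpose])]
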